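/- Self-consistency of the constant-overlap fixed point at large SNR: if mmse(x) = 1 − E tanh(x + √x Z) with Z ∼ N(0,1) and Δ*(λ) solves 1 − Δ* = mmse(λ²Δ*²/Σ*), Σ* = Δ* R'(λΔ*(1−Δ*)/Σ*), where R' is continuous at 0 with R'(0) = 1, then (λ, Δ*, Σ*) = (∞, 1, 1) is consistent: as λ → ∞, 1 − Δ*(λ) = exp(−(λ²/2)(1 + o(1))) and λ(1 − Δ*(λ)) → 0, hence R'(λΔ*(1−Δ*)/Σ*) → 1. -/

import Mathlib

open MeasureTheory ProbabilityTheory Real Filter Topology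
open scoped ENNReal NNReal

/-- The Rademacher mmse function `mmse(x) = 1 − E[tanh(x + √x Z)]`, `Z ∼ N(0,1)`. -/
noncomputable def radMMSE (x : ℝ) : ℝ :=
  1 - ∫ z, Real.tanh (x + Real.sqrt x * z) ∂(gaussianReal 0 1)

section Aux

lemma aux_continuous_tanh : Continuous Real.tanh := by
  have : Real.tanh = fun x => Real.sinh x / Real.cosh x := funext Real.tanh_eq_sinh_div_cosh
  rw [this]
  exact Real.continuous_sinh.div Real.continuous_cosh fun x => (Real.cosh_pos x).ne'

lemma aux_one_sub_tanh_pos (t : ℝ) : 0 < 1 - Real.tanh t := by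
  have h := Real.cosh_pos t
  rw [Real.tanh_eq_sinh_div_cosh, sub_pos, div_lt_one h]
  nlinarith [Real.cosh_sub_sinh t, Real.exp_pos (-t)]

lemma aux_one_sub_tanh_le (t : ℝ) : 1 - Real.tanh t ≤ 2 * Real.exp (-t) := by
  have h := Real.cosh_pos t
  have h1 := Real.one_le_cosh t
  have h2 := Real.cosh_sub_sinh t
  rw [Real.tanh_eq_sinh_div_cosh]
  rw [show (1:ℝ) - Real.sinh t / Real.cosh t = (Real.cosh t - Real.sinh t) / Real.cosh t by
    field_simp, h2, div_le_iff₀ h]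
  nlinarith [Real.exp_pos (-t)]

lemma aux_tanh_nonpos {t : ℝ} (ht : t ≤ 0) : Real.tanh t ≤ 0 := by
  rw [Real.tanh_eq_sinh_div_cosh]
  apply div_nonpos_of_nonpos_of_nonneg _ (Real.cosh_pos t).le
  calc Real.sinh t ≤ Real.sinh 0 := Real.sinh_le_sinh.2 ht
    _ = 0 := Real.sinh_zero

lemma aux_abs_tanh_le (t : ℝ) : |Real.tanh t| ≤ 1 := by
  have h1 := aux_one_sub_tanh_pos t
  have h2 := aux_one_sub_tanh_pos (-t)
  rw [Real.tanh_neg] at h2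
  rw [abs_le]; constructor <;> linarith

/-- Conversion of a Gaussian integral to a Lebesgue integral against the density. -/
lemma aux_integral_gaussianReal01 (g : ℝ → ℝ) :
    ∫ z, g z ∂(gaussianReal 0 1) = ∫ z, gaussianPDFReal 0 1 z * g z := by
  rw [gaussianReal_of_var_ne_zero 0 one_ne_zero]
  rw [show gaussianPDF 0 1 = fun x => ((gaussianPDFReal 0 1 x).toNNReal : ℝ≥0∞) from rfl]
  rw [integral_withDensity_eq_integral_smul
    (measurable_gaussianPDFReal 0 1).real_toNNReal g]
  congr 1
  funext z
  simp [NNReal.smul_def, Real.coe_toNNReal _ (gaussianPDFReal_nonneg 0 1 z)]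

lemma aux_integrable_gaussianReal01 {g : ℝ → ℝ}
    (hg : AEStronglyMeasurable g volume)
    (h : Integrable (fun z => gaussianPDFReal 0 1 z * g z)) :
    Integrable g (gaussianReal 0 1) := by
  rw [gaussianReal_of_var_ne_zero 0 one_ne_zero]
  rw [show gaussianPDF 0 1 = fun x => ((gaussianPDFReal 0 1 x).toNNReal : ℝ≥0∞) from rfl]
  rw [integrable_withDensity_iff_integrable_smul
    (measurable_gaussianPDFReal 0 1).real_toNNReal]
  apply h.congr
  filter_upwards with z
  simp [NNReal.smul_def, Real.coe_toNNReal _ (gaussianPDFReal_nonneg 0 1 z)]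

lemma aux_pdf_mul_exp (c z : ℝ) :
    gaussianPDFReal 0 1 z * Real.exp (c * z)
      = Real.exp (c ^ 2 / 2) * gaussianPDFReal c 1 z := by
  simp only [gaussianPDFReal, NNReal.coe_one, mul_one, sub_zero]
  rw [mul_assoc, ← Real.exp_add, mul_comm (Real.exp (c ^ 2 / 2)), mul_assoc, ← Real.exp_add]
  congr 1
  ring

lemma aux_integrable_exp_mul (c : ℝ) :
    Integrable (fun z => Real.exp (c * z)) (gaussianReal 0 1) := by
  apply aux_integrable_gaussianReal01
  · exact (Real.continuous_exp.comp (continuous_const.mul continuous_id)).aestronglyMeasurable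
  · apply Integrable.congr ((integrable_gaussianPDFReal c 1).const_mul (Real.exp (c ^ 2 / 2)))
    filter_upwards with z
    rw [aux_pdf_mul_exp]

lemma aux_integral_exp_mul (c : ℝ) :
    ∫ z, Real.exp (c * z) ∂(gaussianReal 0 1) = Real.exp (c ^ 2 / 2) := by
  rw [aux_integral_gaussianReal01]
  simp_rw [aux_pdf_mul_exp]
  rw [integral_const_mul, integral_gaussianPDFReal_eq_one c one_ne_zero, mul_one]

lemma aux_integrable_tanh (x : ℝ) :
    Integrable (fun z => Real.tanh (x + Real.sqrt x * z)) (gaussianReal 0 1) := by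
  apply (integrable_const (1:ℝ)).mono'
  · exact (aux_continuous_tanh.comp
      (continuous_const.add (continuous_const.mul continuous_id))).aestronglyMeasurable
  · exact ae_of_all _ fun z => by simpa using aux_abs_tanh_le (x + Real.sqrt x * z)

lemma radMMSE_eq (x : ℝ) :
    radMMSE x = ∫ z, (1 - Real.tanh (x + Real.sqrt x * z)) ∂(gaussianReal 0 1) := by
  rw [radMMSE, integral_sub (integrable_const 1) (aux_integrable_tanh x)]
  simp

lemma radMMSE_le (x : ℝ) (hx : 0 ≤ x) : radMMSE x ≤ 2 * Real.exp (-x / 2) := by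
  rw [radMMSE_eq]
  have hint : Integrable (fun z => 2 * Real.exp (-x) * Real.exp (-Real.sqrt x * z))
      (gaussianReal 0 1) := (aux_integrable_exp_mul (-Real.sqrt x)).const_mul _
  have hle : ∫ z, (1 - Real.tanh (x + Real.sqrt x * z)) ∂(gaussianReal 0 1)
      ≤ ∫ z, 2 * Real.exp (-x) * Real.exp (-Real.sqrt x * z) ∂(gaussianReal 0 1) := by
    apply integral_mono ((integrable_const 1).sub (aux_integrable_tanh x)) hint
    intro z
    calc 1 - Real.tanh (x + Real.sqrt x * z) ≤ 2 * Real.exp (-(x + Real.sqrt x * z)) :=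
          aux_one_sub_tanh_le _
      _ = 2 * Real.exp (-x) * Real.exp (-Real.sqrt x * z) := by
          rw [mul_assoc, ← Real.exp_add]; congr 2; ring
  calc ∫ z, (1 - Real.tanh (x + Real.sqrt x * z)) ∂(gaussianReal 0 1)
      ≤ ∫ z, 2 * Real.exp (-x) * Real.exp (-Real.sqrt x * z) ∂(gaussianReal 0 1) := hle
    _ = 2 * Real.exp (-x) * Real.exp ((-Real.sqrt x) ^ 2 / 2) := by
        rw [integral_const_mul, aux_integral_exp_mul]
    _ = 2 * Real.exp (-x / 2) := by
        rw [neg_pow, Real.sq_sqrt hx, mul_assoc, ← Real.exp_add]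
        norm_num
        rw [show -x + x / 2 = -x / 2 by ring]

lemma radMMSE_ge (x : ℝ) (hx : 0 ≤ x) :
    (Real.sqrt (2 * π))⁻¹ * Real.exp (-(Real.sqrt x + 1) ^ 2 / 2) ≤ radMMSE x := by
  set s : ℝ := Real.sqrt x with hs
  have hs0 : 0 ≤ s := Real.sqrt_nonneg x
  have hS : MeasurableSet (Set.Icc (-s - 1) (-s)) := measurableSet_Icc
  set c : ℝ := (Real.sqrt (2 * π))⁻¹ * Real.exp (-(s + 1) ^ 2 / 2) with hc
  -- Step 1: radMMSE x ≥ (γ S).toReal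
  have h1 : ((gaussianReal 0 1) (Set.Icc (-s - 1) (-s))).toReal ≤ radMMSE x := by
    rw [radMMSE_eq]
    have := integral_indicator_const (1:ℝ)
      hS (μ := gaussianReal 0 1)
    rw [smul_eq_mul, mul_one, measureReal_def] at this
    rw [← this]
    apply integral_mono ((integrable_const (1:ℝ)).indicator hS)
      ((integrable_const 1).sub (aux_integrable_tanh x))
    intro z
    simp only [Pi.sub_apply]
    by_cases hz : z ∈ Set.Icc (-s - 1) (-s)
    · rw [Set.indicator_of_mem hz]
      have hz2 : x + s * z ≤ 0 := by
        have : s * z ≤ s * (-s) := mul_le_mul_of_nonneg_left hz.2 hs0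
        have hxs : s * s = x := Real.mul_self_sqrt hx
        nlinarith
      have := aux_tanh_nonpos hz2
      simp only [← hs]
      linarith
    · rw [Set.indicator_of_notMem hz]
      have := aux_one_sub_tanh_pos (x + s * z)
      simp only [← hs]
      linarith
  -- Step 2: measure as set integral of pdf
  have h2 : ((gaussianReal 0 1) (Set.Icc (-s - 1) (-s))).toReal = ∫ z in Set.Icc (-s - 1) (-s), gaussianPDFReal 0 1 z := by
    rw [gaussianReal_apply_eq_integral 0 one_ne_zero _, ENNReal.toReal_ofReal]
    exact setIntegral_nonneg hS fun z _ => gaussianPDFReal_nonneg 0 1 z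
  -- Step 3: lower bound the set integral
  have h3 : c ≤ ∫ z in Set.Icc (-s - 1) (-s), gaussianPDFReal 0 1 z := by
    have hvol : (volume (Set.Icc (-s - 1) (-s))).toReal = 1 := by
      rw [Real.volume_Icc, show (-s) - (-s - 1) = 1 by ring]
      simp
    have hconst : ∫ _ in Set.Icc (-s - 1) (-s), c ∂volume = c := by
      rw [setIntegral_const, measureReal_def, hvol, one_smul]
    rw [← hconst]
    apply setIntegral_mono_on (integrableOn_const measure_Icc_lt_top.ne)
      (integrable_gaussianPDFReal 0 1).integrableOn hS
    intro z hz
    rw [hc]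
    simp only [gaussianPDFReal, NNReal.coe_one, mul_one, sub_zero]
    apply mul_le_mul_of_nonneg_left _ (by positivity)
    apply Real.exp_le_exp.2
    have hz1 : -(s + 1) ≤ z := by linarith [hz.1]
    have hz2 : z ≤ s + 1 := by linarith [hz.2]
    nlinarith
  calc c ≤ ∫ z in Set.Icc (-s - 1) (-s), gaussianPDFReal 0 1 z := h3
    _ = ((gaussianReal 0 1) (Set.Icc (-s - 1) (-s))).toReal := h2.symm
    _ ≤ radMMSE x := h1

lemma radMMSE_pos (x : ℝ) (hx : 0 ≤ x) : 0 < radMMSE x :=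
  lt_of_lt_of_le (by positivity) (radMMSE_ge x hx)

end Aux

/-- Self-consistency of the constant-overlap fixed point at large SNR: if
`(Δ*(λ), Σ*(λ))` solves the one-step AMP fixed-point system
`1 − Δ* = mmse(λ²Δ*²/Σ*)`, `Σ* = Δ* R'(λΔ*(1−Δ*)/Σ*)`, with `R'` continuous at `0`,
`R'(0) = 1`, and `Δ* → 1`, `Σ* → 1` as `λ → ∞`, then
`1 − Δ*(λ) = exp(−(λ²/2)(1 + o(1)))` (i.e. `log(1 − Δ*(λ))/λ² → −1/2`),
`λ(1 − Δ*(λ)) → 0`, and `R'(λΔ*(1−Δ*)/Σ*) → 1`. -/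
theorem amp_fixed_point_large_snr
    (R' : ℝ → ℝ) (hR'cont : ContinuousAt R' 0) (hR'0 : R' 0 = 1)
    (Δ Sig : ℝ → ℝ)
    (hΔ : ∀ lam : ℝ, 0 < lam → Δ lam ∈ Set.Ioc (0:ℝ) 1)
    (hSig : ∀ lam : ℝ, 0 < lam → 0 < Sig lam)
    (hfix1 : ∀ lam : ℝ, 0 < lam →
      1 - Δ lam = radMMSE (lam^2 * (Δ lam)^2 / Sig lam))
    (hfix2 : ∀ lam : ℝ, 0 < lam →
      Sig lam = Δ lam * R' (lam * Δ lam * (1 - Δ lam) / Sig lam))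
    (hΔlim : Tendsto Δ atTop (nhds 1))
    (hSiglim : Tendsto Sig atTop (nhds 1)) :
    Tendsto (fun lam : ℝ => Real.log (1 - Δ lam) / lam^2) atTop (nhds (-(1:ℝ)/2))
    ∧ Tendsto (fun lam : ℝ => lam * (1 - Δ lam)) atTop (nhds 0)
    ∧ Tendsto (fun lam : ℝ => R' (lam * Δ lam * (1 - Δ lam) / Sig lam))
        atTop (nhds 1) := by
  set r : ℝ → ℝ := fun lam => (Δ lam) ^ 2 / Sig lam with hr_def
  have hxr : ∀ lam : ℝ, lam ^ 2 * (Δ lam) ^ 2 / Sig lam = lam ^ 2 * r lam := fun lam => by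
    rw [hr_def]; ring
  have hr : Tendsto r atTop (𝓝 1) := by
    have h := (hΔlim.pow 2).div hSiglim one_ne_zero
    norm_num at h; exact h
  have hpos : ∀ᶠ lam : ℝ in atTop, 0 < lam := eventually_gt_atTop 0
  have hr_half : ∀ᶠ lam in atTop, (1:ℝ) / 2 ≤ r lam :=
    hr.eventually (eventually_ge_nhds (by norm_num))
  have hr_pos : ∀ᶠ lam in atTop, 0 ≤ r lam :=
    hr_half.mono fun lam h => by linarith
  have hx_nonneg : ∀ᶠ lam in atTop, 0 ≤ lam ^ 2 * r lam :=
    hr_pos.mono fun lam h => by positivity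
  have hx_ge : ∀ᶠ lam in atTop, lam ^ 2 / 2 ≤ lam ^ 2 * r lam := by
    filter_upwards [hr_half] with lam h
    have := mul_le_mul_of_nonneg_left h (sq_nonneg lam)
    linarith
  have hkey : ∀ᶠ lam in atTop, 1 - Δ lam = radMMSE (lam ^ 2 * r lam) := by
    filter_upwards [hpos] with lam hl
    rw [← hxr]; exact hfix1 lam hl
  have hΔle1 : ∀ᶠ lam in atTop, Δ lam ≤ 1 :=
    hpos.mono fun lam hl => (hΔ lam hl).2
  have hql : Tendsto (fun lam : ℝ => lam ^ 2) atTop atTop :=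
    tendsto_pow_atTop two_ne_zero
  -- Part 1
  have part1 : Tendsto (fun lam : ℝ => Real.log (1 - Δ lam) / lam ^ 2) atTop
      (𝓝 (-(1:ℝ) / 2)) := by
    set U : ℝ → ℝ := fun lam => Real.log 2 / lam ^ 2 - r lam / 2 with hU_def
    set L : ℝ → ℝ := fun lam =>
      -(Real.sqrt (r lam) + 1 / lam) ^ 2 / 2 - Real.log (Real.sqrt (2 * π)) / lam ^ 2
      with hL_def
    have hUlim : Tendsto U atTop (𝓝 (-(1:ℝ) / 2)) := by
      have h1 : Tendsto (fun lam : ℝ => Real.log 2 / lam ^ 2) atTop (𝓝 0) :=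
        tendsto_const_nhds.div_atTop hql
      have h2 := h1.sub (hr.div_const 2)
      rw [hU_def]
      convert h2 using 2
      norm_num
    have hLlim : Tendsto L atTop (𝓝 (-(1:ℝ) / 2)) := by
      have h1 : Tendsto (fun lam : ℝ => Real.sqrt (r lam) + 1 / lam) atTop (𝓝 1) := by
        have hs := hr.sqrt
        rw [Real.sqrt_one] at hs
        have hi : Tendsto (fun lam : ℝ => 1 / lam) atTop (𝓝 0) :=
          tendsto_const_nhds.div_atTop tendsto_id
        simpa using hs.add hi
      have h2 : Tendsto (fun lam : ℝ =>
          -(Real.sqrt (r lam) + 1 / lam) ^ 2 / 2) atTop (𝓝 (-(1:ℝ) / 2)) := by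
        have := ((h1.pow 2).neg).div_const 2
        simpa using this
      have h3 : Tendsto (fun lam : ℝ => Real.log (Real.sqrt (2 * π)) / lam ^ 2) atTop
          (𝓝 0) := tendsto_const_nhds.div_atTop hql
      have h4 := h2.sub h3
      rw [hL_def]
      simpa using h4
    have hup : ∀ᶠ lam in atTop, Real.log (1 - Δ lam) / lam ^ 2 ≤ U lam := by
      filter_upwards [hpos, hx_nonneg, hkey] with lam hl hx0 hk
      have hlog : Real.log (1 - Δ lam) ≤ Real.log 2 + (-(lam ^ 2 * r lam) / 2) := by
        rw [hk]
        calc Real.log (radMMSE (lam ^ 2 * r lam))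
            ≤ Real.log (2 * Real.exp (-(lam ^ 2 * r lam) / 2)) :=
              Real.log_le_log (radMMSE_pos _ hx0) (radMMSE_le _ hx0)
          _ = Real.log 2 + (-(lam ^ 2 * r lam) / 2) := by
              rw [Real.log_mul two_ne_zero (Real.exp_ne_zero _), Real.log_exp]
      have hl2 : (0:ℝ) < lam ^ 2 := by positivity
      have := div_le_div_of_nonneg_right hlog hl2.le
      rw [hU_def]
      calc Real.log (1 - Δ lam) / lam ^ 2
          ≤ (Real.log 2 + -(lam ^ 2 * r lam) / 2) / lam ^ 2 := this
        _ = Real.log 2 / lam ^ 2 - r lam / 2 := by field_simp; ring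
    have hlow : ∀ᶠ lam in atTop, L lam ≤ Real.log (1 - Δ lam) / lam ^ 2 := by
      filter_upwards [hpos, hx_nonneg, hr_pos, hkey] with lam hl hx0 hrp hk
      have hc : (0:ℝ) < (Real.sqrt (2 * π))⁻¹ *
          Real.exp (-(Real.sqrt (lam ^ 2 * r lam) + 1) ^ 2 / 2) := by positivity
      have hlog : -(Real.sqrt (lam ^ 2 * r lam) + 1) ^ 2 / 2
          - Real.log (Real.sqrt (2 * π)) ≤ Real.log (1 - Δ lam) := by
        rw [hk]
        have := Real.log_le_log hc (radMMSE_ge _ hx0)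
        rw [Real.log_mul (by positivity) (Real.exp_ne_zero _), Real.log_exp,
          Real.log_inv] at this
        linarith
      have hl2 : (0:ℝ) < lam ^ 2 := by positivity
      have hdiv := div_le_div_of_nonneg_right hlog hl2.le
      have hsq : Real.sqrt (lam ^ 2 * r lam) = lam * Real.sqrt (r lam) := by
        rw [Real.sqrt_mul (sq_nonneg lam), Real.sqrt_sq hl.le]
      have heq : (-(Real.sqrt (lam ^ 2 * r lam) + 1) ^ 2 / 2
          - Real.log (Real.sqrt (2 * π))) / lam ^ 2 = L lam := by
        rw [hsq, hL_def]
        field_simp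
      rw [heq] at hdiv
      exact hdiv
    exact tendsto_of_tendsto_of_tendsto_of_le_of_le' hLlim hUlim hlow hup
  -- Part 2
  have part2 : Tendsto (fun lam : ℝ => lam * (1 - Δ lam)) atTop (𝓝 0) := by
    have hub : Tendsto (fun lam : ℝ => 2 * (lam * Real.exp (-lam))) atTop (𝓝 0) := by
      have := (tendsto_pow_mul_exp_neg_atTop_nhds_zero 1).const_mul (2:ℝ)
      simpa using this
    apply tendsto_of_tendsto_of_tendsto_of_le_of_le' tendsto_const_nhds hub
    · filter_upwards [hpos, hΔle1] with lam hl hd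
      have : 0 ≤ 1 - Δ lam := by linarith
      positivity
    · filter_upwards [hpos, hx_nonneg, hx_ge, hkey, eventually_ge_atTop (4:ℝ)]
        with lam hl hx0 hxg hk h4
      have h1 : 1 - Δ lam ≤ 2 * Real.exp (-(lam ^ 2 * r lam) / 2) := by
        rw [hk]; exact radMMSE_le _ hx0
      have h2 : Real.exp (-(lam ^ 2 * r lam) / 2) ≤ Real.exp (-lam) := by
        apply Real.exp_le_exp.2
        nlinarith
      calc lam * (1 - Δ lam) ≤ lam * (2 * Real.exp (-(lam ^ 2 * r lam) / 2)) :=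
            mul_le_mul_of_nonneg_left h1 hl.le
        _ ≤ lam * (2 * Real.exp (-lam)) := by
            apply mul_le_mul_of_nonneg_left _ hl.le
            linarith
        _ = 2 * (lam * Real.exp (-lam)) := by ring
  -- Part 3
  have harg : Tendsto (fun lam : ℝ => lam * Δ lam * (1 - Δ lam) / Sig lam) atTop (𝓝 0) := by
    have h1 : Tendsto (fun lam : ℝ => (lam * (1 - Δ lam)) * (Δ lam / Sig lam)) atTop
        (𝓝 0) := by
      have := part2.mul (hΔlim.div hSiglim one_ne_zero)
      simpa using this
    apply h1.congr
    intro lam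
    ring
  have part3 : Tendsto (fun lam : ℝ => R' (lam * Δ lam * (1 - Δ lam) / Sig lam)) atTop
      (𝓝 1) := by
    have h := hR'cont.tendsto
    rw [hR'0] at h
    exact h.comp harg
  exact ⟨part1, part2, part3⟩
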